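/- Let a, b, c, d be real numbers with a + b = c + d, let n ≥ 1, and let k₁, ..., kₙ be real numbers. For a subset S of {1, ..., n} write s_S = Σ_{i ∈ S} k_i. Then for every integer m with 1 ≤ m ≤ n + 1, Σ_{S ⊆ {1,...,n}} (−1)^{|S|} [ (a + s_S)^m + (b + s_S)^m ] = Σ_{S ⊆ {1,...,n}} (−1)^{|S|} [ (c + s_S)^m + (d + s_S)^m ]. Equivalently, the 2^{n+1} numbers obtained by adding a or b to the subset sums over even subsets and c or d to the subset sums over odd subsets have the same m-th power sum as the numbers obtained with the roles of {a,b} and {c,d} interchanged, for all 1 ≤ m ≤ n + 1. -/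

import Mathlib

open Finset

lemma D_zero (k : ℕ → ℝ) : ∀ (T : Finset ℕ) (j : ℕ), j < T.card →
    ∑ S ∈ T.powerset, (-1:ℝ)^S.card * (∑ i ∈ S, k i)^j = 0 := by
  intro T
  induction T using Finset.induction_on with
  | empty => intro j hj; simp at hj
  | @insert a T ha ih =>
    intro j hj
    rw [Finset.powerset_insert, Finset.sum_union, Finset.sum_image]
    · have key : ∀ S ∈ T.powerset,
          (-1:ℝ)^S.card * (∑ i ∈ S, k i)^j
            + (-1:ℝ)^(insert a S).card * (∑ i ∈ insert a S, k i)^j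
          = ∑ i ∈ Finset.range j,
              (-(k a)^(j-i) * (j.choose i : ℝ)) * ((-1:ℝ)^S.card * (∑ x ∈ S, k x)^i) := by
        intro S hS
        have haS : a ∉ S := fun h => ha (Finset.mem_powerset.mp hS h)
        rw [Finset.card_insert_of_notMem haS, Finset.sum_insert haS]
        set s := ∑ x ∈ S, k x with hs
        have h1 : (k a + s)^j
            = ∑ i ∈ Finset.range (j+1), s^i * (k a)^(j-i) * (j.choose i : ℝ) := by
          rw [add_comm]; exact add_pow s (k a) j
        rw [h1, Finset.sum_range_succ, Nat.sub_self, Nat.choose_self, pow_zero]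
        push_cast
        rw [mul_add, Finset.mul_sum,
          Finset.sum_congr rfl (fun x (_ : x ∈ Finset.range j) =>
            show (-1:ℝ)^(S.card+1) * (s^x * k a^(j-x) * (j.choose x:ℝ))
              = -k a^(j-x)*(j.choose x:ℝ)*((-1:ℝ)^S.card * s^x) from by ring)]
        ring
      rw [← Finset.sum_add_distrib, Finset.sum_congr rfl key, Finset.sum_comm]
      apply Finset.sum_eq_zero
      intro i hi
      rw [← Finset.mul_sum, ih i ?_, mul_zero]
      have hjc : j < T.card + 1 := by rwa [Finset.card_insert_of_notMem ha] at hj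
      have := Finset.mem_range.mp hi
      omega
    · intro x hx y hy e
      rw [← Finset.erase_insert (fun h => ha (Finset.mem_powerset.mp hx h)), e,
        Finset.erase_insert (fun h => ha (Finset.mem_powerset.mp hy h))]
    · rw [Finset.disjoint_left]
      intro S hS hS'
      obtain ⟨S', hS', rfl⟩ := Finset.mem_image.mp hS'
      exact ha (Finset.mem_powerset.mp hS (Finset.mem_insert_self a S'))

lemma expand_pow (T : Finset ℕ) (k : ℕ → ℝ) (m : ℕ) (x : ℝ) :
    ∑ S ∈ T.powerset, (-1:ℝ)^S.card * (x + ∑ i ∈ S, k i)^m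
    = ∑ j ∈ Finset.range (m+1), (m.choose j : ℝ) * x^(m-j) *
        ∑ S ∈ T.powerset, (-1:ℝ)^S.card * (∑ i ∈ S, k i)^j := by
  have key : ∀ S ∈ T.powerset, (-1:ℝ)^S.card * (x + ∑ i ∈ S, k i)^m
      = ∑ j ∈ Finset.range (m+1),
          (m.choose j : ℝ) * x^(m-j) * ((-1:ℝ)^S.card * (∑ i ∈ S, k i)^j) := by
    intro S _
    rw [add_comm x, add_pow, Finset.mul_sum]
    exact Finset.sum_congr rfl fun j _ => by ring
  rw [Finset.sum_congr rfl key, Finset.sum_comm]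
  exact Finset.sum_congr rfl fun j _ => by rw [← Finset.mul_sum]

theorem alternating_subset_power_sums_eq (a b c d : ℝ) (h : a + b = c + d)
    (n : ℕ) (hn : 1 ≤ n) (k : ℕ → ℝ) (m : ℕ) (hm1 : 1 ≤ m) (hmn : m ≤ n + 1) :
    ∑ S ∈ (Finset.Icc 1 n).powerset, (-1 : ℝ) ^ S.card *
        ((a + ∑ i ∈ S, k i) ^ m + (b + ∑ i ∈ S, k i) ^ m) =
      ∑ S ∈ (Finset.Icc 1 n).powerset, (-1 : ℝ) ^ S.card *
        ((c + ∑ i ∈ S, k i) ^ m + (d + ∑ i ∈ S, k i) ^ m) := by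
  simp only [mul_add, Finset.sum_add_distrib]
  rw [expand_pow, expand_pow, expand_pow, expand_pow,
    ← Finset.sum_add_distrib, ← Finset.sum_add_distrib]
  apply Finset.sum_congr rfl
  intro j hj
  have hjm : j ≤ m := Nat.lt_succ_iff.mp (Finset.mem_range.mp hj)
  by_cases hjn : j < n
  · rw [D_zero k _ j (by simp [Nat.card_Icc]; omega)]
    ring
  · push_neg at hjn
    have he : m - j ≤ 1 := by omega
    rcases Nat.le_one_iff_eq_zero_or_eq_one.mp he with h0 | h1
    · rw [h0]; ring
    · rw [h1]
      simp only [pow_one]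
      linear_combination ((m.choose j : ℝ) *
        (∑ S ∈ (Finset.Icc 1 n).powerset, (-1:ℝ)^S.card * (∑ i ∈ S, k i)^j)) * h
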